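/- Let Z be a measurable space, D a probability measure on Z, m ≥ 1, a < b real numbers, and 𝒢 a nonempty countable class of measurable functions Z → [a, b]. For every t > 0, the probability over S = (z₁,…,z_m) drawn i.i.d. from D and ε₁,…,ε_m drawn i.i.d. uniformly from {−1, 1}, all independent, that |R_D(𝒢) − (1/m)·sup_{g ∈ 𝒢} Σ_{i=1}^m ε_i g(z_i)| ≥ t is at most 2·exp(−2mt² / ((b−a)² + 4·max{a², b²})). -/

import Mathlib

open Finset MeasureTheory Real ProbabilityTheory


lemma key_ineq (p : ℝ) (hp0 : 0 ≤ p) (hp1 : p ≤ 1) (h : ℝ) :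
    Real.log (1 - p + p * Real.exp h) ≤ p * h + h ^ 2 / 8 := by
  have hpos : ∀ x : ℝ, 0 < 1 - p + p * Real.exp x := by
    intro x
    rcases eq_or_lt_of_le hp0 with hp | hp
    · simp [← hp]
    · nlinarith [Real.exp_pos x, (Real.exp_pos x).le]
  -- G x = p*x + x^2/8 - log(1 - p + p * exp x), show G ≥ 0, G 0 = 0
  set G : ℝ → ℝ := fun x => p * x + x ^ 2 / 8 - Real.log (1 - p + p * Real.exp x) with hG
  set D : ℝ → ℝ := fun x => p + x / 4 - p * Real.exp x / (1 - p + p * Real.exp x) with hD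
  have hGd : ∀ x, HasDerivAt G (D x) x := by
    intro x
    have h1 : HasDerivAt (fun x : ℝ => 1 - p + p * Real.exp x) (p * Real.exp x) x := by
      simpa using (((Real.hasDerivAt_exp x).const_mul p).const_add (1 - p))
    have h2 : HasDerivAt (fun x : ℝ => Real.log (1 - p + p * Real.exp x))
        (p * Real.exp x / (1 - p + p * Real.exp x)) x := h1.log (hpos x).ne'
    have h3 : HasDerivAt (fun x : ℝ => p * x + x ^ 2 / 8) (p + x / 4) x := by
      have := ((hasDerivAt_pow 2 x).div_const 8).const_add (p * x)
      have h4 : HasDerivAt (fun y : ℝ => p * y) p x := by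
        simpa using (hasDerivAt_id x).const_mul p
      have := h4.add ((hasDerivAt_pow 2 x).div_const 8)
      exact this.congr_deriv (by norm_num; ring)
    exact h3.sub h2
  have hDd : ∀ x, HasDerivAt D
      (1/4 - p * (1 - p) * Real.exp x / (1 - p + p * Real.exp x) ^ 2) x := by
    intro x
    have h1 : HasDerivAt (fun x : ℝ => 1 - p + p * Real.exp x) (p * Real.exp x) x := by
      simpa using (((Real.hasDerivAt_exp x).const_mul p).const_add (1 - p))
    have h0 : HasDerivAt (fun x : ℝ => p * Real.exp x) (p * Real.exp x) x :=
      (Real.hasDerivAt_exp x).const_mul p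
    have h2 := h0.div h1 (hpos x).ne'
    have h3 : HasDerivAt (fun x : ℝ => p + x / 4) (1/4) x := by
      simpa using ((hasDerivAt_id x).div_const 4).const_add p
    have := h3.sub h2
    exact this.congr_deriv (by ring)
  have hD0 : D 0 = 0 := by
    simp [hD]
  have hDmono : Monotone D := by
    apply monotone_of_deriv_nonneg (fun x => (hDd x).differentiableAt)
    intro x
    rw [(hDd x).deriv]
    have hv := hpos x
    have he := Real.exp_pos x
    rw [sub_nonneg, div_le_iff₀ (by positivity)]
    nlinarith [sq_nonneg (1 - p - p * Real.exp x)]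
  have hG0 : G 0 = 0 := by simp [hG]
  have key : ∀ x, 0 ≤ G x := by
    intro x
    rcases le_total 0 x with hx | hx
    · have : MonotoneOn G (Set.Ici 0) := by
        apply monotoneOn_of_deriv_nonneg (convex_Ici 0)
          ((Differentiable.continuous (fun y => (hGd y).differentiableAt)).continuousOn)
        · intro y _; exact (hGd y).differentiableAt.differentiableWithinAt
        · intro y hy
          rw [(hGd y).deriv]
          rw [interior_Ici] at hy
          calc (0:ℝ) = D 0 := hD0.symm
            _ ≤ D y := hDmono (le_of_lt hy)
      have := this (Set.self_mem_Ici) (Set.mem_Ici.2 hx) hx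
      rwa [hG0] at this
    · have : AntitoneOn G (Set.Iic 0) := by
        apply antitoneOn_of_deriv_nonpos (convex_Iic 0)
          ((Differentiable.continuous (fun y => (hGd y).differentiableAt)).continuousOn)
        · intro y _; exact (hGd y).differentiableAt.differentiableWithinAt
        · intro y hy
          rw [(hGd y).deriv]
          rw [interior_Iic] at hy
          calc D y ≤ D 0 := hDmono (le_of_lt hy)
            _ = 0 := hD0
      have := this (Set.mem_Iic.2 hx) (Set.self_mem_Iic) hx
      rwa [hG0] at this
  have := key h
  simp only [hG] at this
  linarith

lemma hoeffding_lemma {Ω : Type*} [MeasurableSpace Ω] (μ : Measure Ω) [IsProbabilityMeasure μ]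
    (X : Ω → ℝ) (hXm : Measurable X) (α β : ℝ) (hαβ : α < β)
    (hX : ∀ ω, X ω ∈ Set.Icc α β) (hmean : ∫ ω, X ω ∂μ = 0) (s : ℝ) :
    ∫ ω, Real.exp (s * X ω) ∂μ ≤ Real.exp (s ^ 2 * (β - α) ^ 2 / 8) := by
  have hXi : Integrable X μ := by
    refine (integrable_const (|α| + |β|)).mono' hXm.aestronglyMeasurable ?_
    filter_upwards with ω
    have h1 := (hX ω).1; have h2 := (hX ω).2
    rw [Real.norm_eq_abs, abs_le]
    constructor
    · nlinarith [abs_nonneg α, abs_nonneg β, neg_abs_le α, le_abs_self β]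
    · nlinarith [abs_nonneg α, abs_nonneg β, neg_abs_le β, le_abs_self β]
  have hα0 : α ≤ 0 := by
    have : ∫ ω, (α : ℝ) ∂μ ≤ ∫ ω, X ω ∂μ :=
      integral_mono (integrable_const α) hXi fun ω => (hX ω).1
    simpa [hmean] using this
  have hβ0 : 0 ≤ β := by
    have : ∫ ω, X ω ∂μ ≤ ∫ ω, (β : ℝ) ∂μ :=
      integral_mono hXi (integrable_const β) fun ω => (hX ω).2
    simpa [hmean] using this
  have hba : 0 < β - α := by linarith
  -- pointwise convexity bound
  have hconv : ∀ ω, Real.exp (s * X ω) ≤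
      (β - X ω) / (β - α) * Real.exp (s * α) + (X ω - α) / (β - α) * Real.exp (s * β) := by
    intro ω
    have h1 := (hX ω).1; have h2 := (hX ω).2
    have ha : (0:ℝ) ≤ (β - X ω) / (β - α) := div_nonneg (by linarith) hba.le
    have hb : (0:ℝ) ≤ (X ω - α) / (β - α) := div_nonneg (by linarith) hba.le
    have hab : (β - X ω) / (β - α) + (X ω - α) / (β - α) = 1 := by field_simp; ring
    have := convexOn_exp.2 (Set.mem_univ (s * α)) (Set.mem_univ (s * β)) ha hb hab
    have heq : ((β - X ω) / (β - α)) • (s * α) + ((X ω - α) / (β - α)) • (s * β) = s * X ω := by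
      simp only [smul_eq_mul]
      field_simp
      ring
    rw [heq] at this
    simpa [smul_eq_mul] using this
  -- integrate
  have hInt1 : Integrable (fun ω => Real.exp (s * X ω)) μ := by
    refine (integrable_const (Real.exp (|s| * (|α| + |β|)))).mono'
      (hXm.const_mul s).exp.aestronglyMeasurable ?_
    filter_upwards with ω
    rw [Real.norm_eq_abs, abs_of_nonneg (Real.exp_nonneg _), Real.exp_le_exp]
    have h1 := (hX ω).1; have h2 := (hX ω).2
    have : |X ω| ≤ |α| + |β| := by
      rw [abs_le]; constructor
      · nlinarith [abs_nonneg α, abs_nonneg β, neg_abs_le α, le_abs_self β]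
      · nlinarith [abs_nonneg α, abs_nonneg β, neg_abs_le β, le_abs_self β]
    calc s * X ω ≤ |s * X ω| := le_abs_self _
      _ = |s| * |X ω| := abs_mul s _
      _ ≤ |s| * (|α| + |β|) := by
          exact mul_le_mul_of_nonneg_left this (abs_nonneg s)
  have hInt2 : Integrable (fun ω =>
      (β - X ω) / (β - α) * Real.exp (s * α) + (X ω - α) / (β - α) * Real.exp (s * β)) μ := by
    apply Integrable.add
    · exact (((integrable_const β).sub hXi).div_const _).mul_const _
    · exact ((hXi.sub (integrable_const α)).div_const _).mul_const _
  have hstep : ∫ ω, Real.exp (s * X ω) ∂μ ≤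
      β / (β - α) * Real.exp (s * α) + (-α) / (β - α) * Real.exp (s * β) := by
    calc ∫ ω, Real.exp (s * X ω) ∂μ ≤ ∫ ω, ((β - X ω) / (β - α) * Real.exp (s * α) +
          (X ω - α) / (β - α) * Real.exp (s * β)) ∂μ := integral_mono hInt1 hInt2 hconv
      _ = β / (β - α) * Real.exp (s * α) + (-α) / (β - α) * Real.exp (s * β) := by
          have i1 : ∫ ω, (β - X ω) / (β - α) * Real.exp (s * α) ∂μ
              = β / (β - α) * Real.exp (s * α) := by
            rw [integral_mul_const, integral_div,
              integral_sub (integrable_const β) hXi, hmean, integral_const]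
            simp
          have i2 : ∫ ω, (X ω - α) / (β - α) * Real.exp (s * β) ∂μ
              = (-α) / (β - α) * Real.exp (s * β) := by
            rw [integral_mul_const, integral_div,
              integral_sub hXi (integrable_const α), hmean, integral_const]
            simp
          have j1 : Integrable (fun ω => (β - X ω) / (β - α) * Real.exp (s * α)) μ :=
            (((integrable_const β).sub hXi).div_const _).mul_const _
          have j2 : Integrable (fun ω => (X ω - α) / (β - α) * Real.exp (s * β)) μ :=
            ((hXi.sub (integrable_const α)).div_const _).mul_const _
          rw [integral_add j1 j2, i1, i2]
  -- apply key inequality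
  set p : ℝ := -α / (β - α) with hp
  set h : ℝ := s * (β - α) with hh
  have hp0 : 0 ≤ p := div_nonneg (by linarith) hba.le
  have hp1 : p ≤ 1 := by rw [hp, div_le_one hba]; linarith
  have hposd : 0 < 1 - p + p * Real.exp h := by
    rcases eq_or_lt_of_le hp0 with hq | hq
    · simp [← hq]
    · nlinarith [Real.exp_pos h, (Real.exp_pos h).le]
  have hkey := key_ineq p hp0 hp1 h
  have hkey2 : 1 - p + p * Real.exp h ≤ Real.exp (p * h + h ^ 2 / 8) := by
    rw [← Real.exp_log hposd]
    exact Real.exp_le_exp.2 hkey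
  have hmul : (1 - p + p * Real.exp h) * Real.exp (-(p * h)) ≤ Real.exp (h ^ 2 / 8) := by
    calc (1 - p + p * Real.exp h) * Real.exp (-(p * h))
        ≤ Real.exp (p * h + h ^ 2 / 8) * Real.exp (-(p * h)) :=
          mul_le_mul_of_nonneg_right hkey2 (Real.exp_nonneg _)
      _ = Real.exp (h ^ 2 / 8) := by rw [← Real.exp_add]; ring_nf
  have e1 : s * α = -(p * h) := by rw [hp, hh]; field_simp
  have e2 : s * β = h - p * h := by rw [hp, hh]; field_simp; ring
  have e3 : β / (β - α) = 1 - p := by rw [hp]; field_simp; ring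
  have e4 : (-α) / (β - α) = p := by rw [hp]
  have expand : β / (β - α) * Real.exp (s * α) + (-α) / (β - α) * Real.exp (s * β)
      = (1 - p + p * Real.exp h) * Real.exp (-(p * h)) := by
    rw [e1, e2, e3, e4, sub_eq_add_neg h (p * h), Real.exp_add]
    ring
  have efin : h ^ 2 / 8 = s ^ 2 * (β - α) ^ 2 / 8 := by rw [hh]; ring
  calc ∫ ω, Real.exp (s * X ω) ∂μ
      ≤ β / (β - α) * Real.exp (s * α) + (-α) / (β - α) * Real.exp (s * β) := hstep
    _ = (1 - p + p * Real.exp h) * Real.exp (-(p * h)) := expand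
    _ ≤ Real.exp (h ^ 2 / 8) := hmul
    _ = Real.exp (s ^ 2 * (β - α) ^ 2 / 8) := by rw [efin]

lemma integrable_of_bounded {Ω : Type*} [MeasurableSpace Ω] {μ : Measure Ω}
    [IsFiniteMeasure μ] {f : Ω → ℝ} (hf : AEStronglyMeasurable f μ) (M : ℝ)
    (h : ∀ ω, |f ω| ≤ M) : Integrable f μ := by
  refine (integrable_const M).mono' hf ?_
  filter_upwards with ω
  rw [Real.norm_eq_abs]
  exact h ω

lemma nonempty_of_prob {Ω : Type*} [MeasurableSpace Ω] (μ : Measure Ω)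
    [IsProbabilityMeasure μ] : Nonempty Ω := by
  rcases isEmpty_or_nonempty Ω with hE | hE
  · have h0 : μ Set.univ = 1 := measure_univ
    rw [Set.eq_empty_of_isEmpty (Set.univ : Set Ω), measure_empty] at h0
    exact absurd h0 (by simp)
  · exact hE

lemma hoeffding_osc {Ω : Type*} [MeasurableSpace Ω] (μ : Measure Ω) [IsProbabilityMeasure μ]
    (X : Ω → ℝ) (hXm : Measurable X) (c : ℝ) (hc : 0 < c)
    (hosc : ∀ ω ω', X ω - X ω' ≤ c) (s : ℝ) :
    ∫ ω, Real.exp (s * (X ω - ∫ ω', X ω' ∂μ)) ∂μ ≤ Real.exp (s ^ 2 * c ^ 2 / 8) := by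
  rcases isEmpty_or_nonempty Ω with hE | hE
  · have h0 : μ Set.univ = 1 := measure_univ
    rw [Set.eq_empty_of_isEmpty (Set.univ : Set Ω), measure_empty] at h0
    exact absurd h0 (by simp)
  obtain ⟨ω₀⟩ := hE
  have hXb : ∀ ω, |X ω| ≤ |X ω₀| + c := by
    intro ω
    have h1 := hosc ω ω₀
    have h2 := hosc ω₀ ω
    rw [abs_le]
    constructor
    · nlinarith [neg_abs_le (X ω₀)]
    · nlinarith [le_abs_self (X ω₀)]
  have hXi : Integrable X μ := integrable_of_bounded hXm.aestronglyMeasurable _ hXb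
  set E := ∫ ω', X ω' ∂μ with hE'
  have hbdd : BddBelow (Set.range X) := ⟨X ω₀ - c, fun v ⟨ω, hω⟩ => by
    have := hosc ω₀ ω; linarith [hω ▸ this]⟩
  set α := sInf (Set.range X) with hα
  have hαle : ∀ ω, α ≤ X ω := fun ω => csInf_le hbdd ⟨ω, rfl⟩
  have hleα : ∀ ω, X ω ≤ α + c := by
    intro ω
    have : X ω - c ≤ α := le_csInf ⟨X ω₀, ω₀, rfl⟩ (fun v ⟨ω', hω'⟩ => by
      have := hosc ω ω'; linarith [hω' ▸ this])
    linarith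
  have hmean : ∫ ω, (X ω - E) ∂μ = 0 := by
    rw [integral_sub hXi (integrable_const E), integral_const]
    simp [hE']
  have := hoeffding_lemma μ (fun ω => X ω - E) (hXm.sub measurable_const)
    (α - E) (α + c - E) (by linarith)
    (fun ω => ⟨by change α - E ≤ X ω - E; linarith [hαle ω],
      by change X ω - E ≤ α + c - E; linarith [hleα ω]⟩)
    hmean s
  calc ∫ ω, Real.exp (s * (X ω - E)) ∂μ ≤ Real.exp (s ^ 2 * (α + c - E - (α - E)) ^ 2 / 8) :=
        this
    _ = Real.exp (s ^ 2 * c ^ 2 / 8) := by ring_nf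

lemma mgf_prod {Ω₁ Ω₂ : Type*} [MeasurableSpace Ω₁] [MeasurableSpace Ω₂]
    (μ : Measure Ω₁) (ν : Measure Ω₂) [IsProbabilityMeasure μ] [IsProbabilityMeasure ν]
    (f : Ω₁ × Ω₂ → ℝ) (hf : Measurable f) (M : ℝ) (hM : ∀ p, |f p| ≤ M)
    (s K₁ K₂ : ℝ) (hK₁ : 0 ≤ K₁)
    (H1 : ∀ y, ∫ x, Real.exp (s * (f (x, y) - ∫ x', f (x', y) ∂μ)) ∂μ ≤ K₁)
    (H2 : ∫ y, Real.exp (s * ((∫ x, f (x, y) ∂μ) - ∫ p, f p ∂(μ.prod ν))) ∂ν ≤ K₂) :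
    ∫ p, Real.exp (s * (f p - ∫ p', f p' ∂(μ.prod ν))) ∂(μ.prod ν) ≤ K₁ * K₂ := by
  set E := ∫ p, f p ∂(μ.prod ν) with hEdef
  set g : Ω₂ → ℝ := fun y => ∫ x, f (x, y) ∂μ with hgdef
  have hfi : Integrable f (μ.prod ν) := integrable_of_bounded hf.aestronglyMeasurable M hM
  have hgsm : StronglyMeasurable g := hf.stronglyMeasurable.integral_prod_left'
  have hgb : ∀ y, |g y| ≤ M := by
    intro y
    rw [← Real.norm_eq_abs]
    calc ‖∫ x, f (x, y) ∂μ‖ ≤ M * (μ Set.univ).toReal :=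
          norm_integral_le_of_norm_le_const (Filter.Eventually.of_forall fun x => by
            rw [Real.norm_eq_abs]; exact hM (x, y))
      _ = M := by simp
  have hEb : |E| ≤ M := by
    rw [← Real.norm_eq_abs]
    calc ‖E‖ ≤ M * ((μ.prod ν) Set.univ).toReal :=
          norm_integral_le_of_norm_le_const (Filter.Eventually.of_forall fun p => by
            rw [Real.norm_eq_abs]; exact hM p)
      _ = M := by simp
  have hne : Nonempty (Ω₁ × Ω₂) := by
    have := nonempty_of_prob μ; have := nonempty_of_prob ν
    exact instNonemptyProd
  have hMnn : 0 ≤ M := le_trans (abs_nonneg _) (hM (Classical.arbitrary _))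
  -- integrability facts
  have hexpm : Measurable fun p : Ω₁ × Ω₂ => Real.exp (s * (f p - E)) :=
    (((hf.sub measurable_const).const_mul s)).exp
  have hexpb : ∀ p, |Real.exp (s * (f p - E))| ≤ Real.exp (|s| * (2 * M)) := by
    intro p
    rw [abs_of_nonneg (Real.exp_nonneg _), Real.exp_le_exp]
    calc s * (f p - E) ≤ |s * (f p - E)| := le_abs_self _
      _ = |s| * |f p - E| := abs_mul _ _
      _ ≤ |s| * (2 * M) := by
          apply mul_le_mul_of_nonneg_left _ (abs_nonneg s)
          have := hM p
          have := hEb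
          calc |f p - E| ≤ |f p| + |E| := abs_sub _ _
            _ ≤ 2 * M := by linarith
  have hIexp : Integrable (fun p => Real.exp (s * (f p - E))) (μ.prod ν) :=
    integrable_of_bounded hexpm.aestronglyMeasurable _ hexpb
  -- Fubini
  have step1 : ∫ p, Real.exp (s * (f p - E)) ∂(μ.prod ν)
      = ∫ y, ∫ x, Real.exp (s * (f (x, y) - E)) ∂μ ∂ν :=
    integral_prod_symm _ hIexp
  -- inner factorization
  have step2 : ∀ y, ∫ x, Real.exp (s * (f (x, y) - E)) ∂μ
      = Real.exp (s * (g y - E)) * ∫ x, Real.exp (s * (f (x, y) - g y)) ∂μ := by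
    intro y
    rw [← integral_const_mul]
    congr 1
    funext x
    rw [← Real.exp_add]
    congr 1
    ring
  have step3 : ∀ y, ∫ x, Real.exp (s * (f (x, y) - E)) ∂μ
      ≤ Real.exp (s * (g y - E)) * K₁ := by
    intro y
    rw [step2 y]
    exact mul_le_mul_of_nonneg_left (H1 y) (Real.exp_nonneg _)
  -- outer bound
  have hinnerM : Measurable fun p : Ω₁ × Ω₂ => Real.exp (s * (f p - E)) := hexpm
  have houtm : StronglyMeasurable fun y => ∫ x, Real.exp (s * (f (x, y) - E)) ∂μ :=
    hexpm.stronglyMeasurable.integral_prod_left'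
  have houtb : ∀ y, |∫ x, Real.exp (s * (f (x, y) - E)) ∂μ| ≤ Real.exp (|s| * (2 * M)) := by
    intro y
    rw [← Real.norm_eq_abs]
    calc ‖∫ x, Real.exp (s * (f (x, y) - E)) ∂μ‖ ≤ Real.exp (|s| * (2 * M)) * (μ Set.univ).toReal :=
          norm_integral_le_of_norm_le_const (Filter.Eventually.of_forall fun x => by
            rw [Real.norm_eq_abs]; exact hexpb (x, y))
      _ = _ := by simp
  have hI1 : Integrable (fun y => ∫ x, Real.exp (s * (f (x, y) - E)) ∂μ) ν :=
    integrable_of_bounded houtm.aestronglyMeasurable _ houtb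
  have hI2 : Integrable (fun y => Real.exp (s * (g y - E)) * K₁) ν := by
    apply integrable_of_bounded
      ((((hgsm.measurable.sub measurable_const).const_mul s).exp.mul measurable_const)).aestronglyMeasurable
      (Real.exp (|s| * (2 * M)) * K₁)
    intro y
    show |Real.exp (s * (g y - E)) * K₁| ≤ _
    rw [abs_mul, abs_of_nonneg hK₁]
    apply mul_le_mul_of_nonneg_right _ hK₁
    rw [abs_of_nonneg (Real.exp_nonneg _), Real.exp_le_exp]
    calc s * (g y - E) ≤ |s * (g y - E)| := le_abs_self _
      _ = |s| * |g y - E| := abs_mul _ _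
      _ ≤ |s| * (2 * M) := by
          apply mul_le_mul_of_nonneg_left _ (abs_nonneg s)
          calc |g y - E| ≤ |g y| + |E| := abs_sub _ _
            _ ≤ 2 * M := by linarith [hgb y, hEb]
  calc ∫ p, Real.exp (s * (f p - E)) ∂(μ.prod ν)
      = ∫ y, ∫ x, Real.exp (s * (f (x, y) - E)) ∂μ ∂ν := step1
    _ ≤ ∫ y, Real.exp (s * (g y - E)) * K₁ ∂ν := integral_mono hI1 hI2 step3
    _ = (∫ y, Real.exp (s * (g y - E)) ∂ν) * K₁ := integral_mul_const _ _
    _ ≤ K₂ * K₁ := mul_le_mul_of_nonneg_right H2 hK₁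
    _ = K₁ * K₂ := mul_comm _ _

lemma mgf_pi {Ω : Type*} [MeasurableSpace Ω] (μ : Measure Ω) [IsProbabilityMeasure μ] :
    ∀ (n : ℕ) (f : (Fin n → Ω) → ℝ), Measurable f → ∀ (M : ℝ), (∀ x, |f x| ≤ M) →
    ∀ (c : Fin n → ℝ), (∀ i, 0 < c i) →
    (∀ (i : Fin n) (x x' : Fin n → Ω), (∀ j, j ≠ i → x j = x' j) → f x - f x' ≤ c i) →
    ∀ s : ℝ,
    ∫ x, Real.exp (s * (f x - ∫ x', f x' ∂(Measure.pi fun _ : Fin n => μ)))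
        ∂(Measure.pi fun _ : Fin n => μ)
      ≤ Real.exp (s ^ 2 * (∑ i, c i ^ 2) / 8) := by
  intro n
  induction n with
  | zero =>
    intro f hf M hM c hc hbd s
    have hsub : Subsingleton (Fin 0 → Ω) := ⟨fun a b => funext fun i => i.elim0⟩
    set x₀ : Fin 0 → Ω := fun i => i.elim0 with hx₀
    have hconst : ∀ x : Fin 0 → Ω, f x = f x₀ := fun x => congrArg f (Subsingleton.elim _ _)
    have hint : ∫ x', f x' ∂(Measure.pi fun _ : Fin 0 => μ) = f x₀ := by
      rw [integral_congr_ae (Filter.Eventually.of_forall hconst), integral_const]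
      simp
    have : ∀ x : Fin 0 → Ω, Real.exp (s * (f x - ∫ x', f x' ∂(Measure.pi fun _ : Fin 0 => μ)))
        = 1 := by
      intro x
      rw [hint, hconst x]
      simp
    rw [integral_congr_ae (Filter.Eventually.of_forall this), integral_const]
    simp [Real.exp_nonneg]
  | succ n ih =>
    intro f hf M hM c hc hbd s
    set e := MeasurableEquiv.piFinSuccAbove (fun _ : Fin (n+1) => Ω) 0 with he
    have mp := measurePreserving_piFinSuccAbove (fun _ : Fin (n+1) => μ) 0
    set ν := Measure.pi fun _ : Fin n => μ with hν
    set F : Ω × (Fin n → Ω) → ℝ := fun p => f (e.symm p) with hF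
    have hsymm : ∀ p : Ω × (Fin n → Ω), e.symm p = Fin.cons p.1 p.2 := by
      intro p
      show (Fin.insertNthEquiv (fun _ : Fin (n+1) => Ω) 0) p = _
      simp [Fin.insertNthEquiv, Fin.insertNth_zero']
    have hFm : Measurable F := hf.comp e.symm.measurable
    have hFb : ∀ p, |F p| ≤ M := fun p => hM _
    have hEq : ∀ (h : (Fin (n+1) → Ω) → ℝ),
        ∫ x, h x ∂(Measure.pi fun _ : Fin (n+1) => μ) = ∫ p, h (e.symm p) ∂(μ.prod ν) :=
      fun h => ((MeasurePreserving.symm e mp).integral_comp e.symm.measurableEmbedding h).symm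
    have hFi : Integrable F (μ.prod ν) := integrable_of_bounded hFm.aestronglyMeasurable M hFb
    have hEeq : ∫ x, f x ∂(Measure.pi fun _ : Fin (n+1) => μ) = ∫ p, F p ∂(μ.prod ν) := hEq f
    set E := ∫ p, F p ∂(μ.prod ν) with hEd
    -- H1 via Hoeffding
    have H1 : ∀ y : Fin n → Ω, ∫ x, Real.exp (s * (F (x, y) - ∫ x', F (x', y) ∂μ)) ∂μ
        ≤ Real.exp (s ^ 2 * (c 0) ^ 2 / 8) := by
      intro y
      apply hoeffding_osc μ (fun x => F (x, y))
        (hFm.comp (measurable_id.prodMk measurable_const)) (c 0) (hc 0)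
      intro x x'
      have := hbd 0 (Fin.cons x y) (Fin.cons x' y) ?_
      · simpa [hF, hsymm] using this
      · intro j hj
        obtain ⟨k, rfl⟩ := Fin.exists_succ_eq_of_ne_zero hj
        simp [Fin.cons_succ]
    -- g and H2 via IH
    set g : (Fin n → Ω) → ℝ := fun y => ∫ x, F (x, y) ∂μ with hg
    have hgsm : StronglyMeasurable g := hFm.stronglyMeasurable.integral_prod_left'
    have hgb : ∀ y, |g y| ≤ M := by
      intro y
      rw [← Real.norm_eq_abs]
      calc ‖∫ x, F (x, y) ∂μ‖ ≤ M * (μ Set.univ).toReal :=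
            norm_integral_le_of_norm_le_const (Filter.Eventually.of_forall fun x => by
              rw [Real.norm_eq_abs]; exact hFb (x, y))
        _ = M := by simp
    have hgbd : ∀ (i : Fin n) (y y' : Fin n → Ω), (∀ j, j ≠ i → y j = y' j) →
        g y - g y' ≤ c i.succ := by
      intro i y y' hyy
      have hint1 : Integrable (fun x => F (x, y)) μ :=
        integrable_of_bounded (hFm.comp (measurable_id.prodMk measurable_const)).aestronglyMeasurable
          M (fun x => hFb _)
      have hint2 : Integrable (fun x => F (x, y')) μ :=
        integrable_of_bounded (hFm.comp (measurable_id.prodMk measurable_const)).aestronglyMeasurable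
          M (fun x => hFb _)
      rw [hg]
      simp only
      rw [← integral_sub hint1 hint2]
      calc ∫ x, (F (x, y) - F (x, y')) ∂μ ≤ ∫ _, c i.succ ∂μ := by
            apply integral_mono (hint1.sub hint2) (integrable_const _)
            intro x
            have := hbd i.succ (Fin.cons x y) (Fin.cons x y') ?_
            · simpa [hF, hsymm] using this
            · intro j hj
              rcases Fin.eq_zero_or_eq_succ j with rfl | ⟨k, rfl⟩
              · simp
              · have hk : k ≠ i := fun h => hj (by rw [h])
                simp [Fin.cons_succ, hyy k hk]
        _ = c i.succ := by simp
    have H2' := ih g hgsm.measurable M hgb (fun i => c i.succ) (fun i => hc i.succ) hgbd s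
    have hEg : ∫ y, g y ∂ν = E := by
      rw [hEd, integral_prod_symm _ hFi]
    have H2 : ∫ y, Real.exp (s * (g y - E)) ∂ν
        ≤ Real.exp (s ^ 2 * (∑ i : Fin n, c i.succ ^ 2) / 8) := by
      rw [← hEg]
      exact H2'
    -- combine
    have main := mgf_prod μ ν F hFm M hFb s _ _ (Real.exp_nonneg _) H1 H2
    calc ∫ x, Real.exp (s * (f x - ∫ x', f x' ∂(Measure.pi fun _ : Fin (n+1) => μ)))
          ∂(Measure.pi fun _ : Fin (n+1) => μ)
        = ∫ p, Real.exp (s * (F p - E)) ∂(μ.prod ν) := by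
          rw [hEeq]
          exact hEq _
      _ ≤ Real.exp (s ^ 2 * (c 0) ^ 2 / 8) *
            Real.exp (s ^ 2 * (∑ i : Fin n, c i.succ ^ 2) / 8) := main
      _ = Real.exp (s ^ 2 * (∑ i, c i ^ 2) / 8) := by
          rw [← Real.exp_add, Fin.sum_univ_succ]
          ring_nf

/-- The empirical Rademacher complexity of a set `A ⊆ ℝ^m`. -/
noncomputable def radComp (m : ℕ) (A : Set (Fin m → ℝ)) : ℝ :=
  ((2 : ℝ) ^ m)⁻¹ * ∑ ε : Fin m → Bool,
    sSup ((fun v => (1 / (m : ℝ)) * ∑ i, (if ε i then (1 : ℝ) else -1) * v i) '' A)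

/-- Empirical Rademacher complexity of a function class `G` on the sample `S`. -/
noncomputable def empRad {Z : Type*} (m : ℕ) (S : Fin m → Z) (G : Set (Z → ℝ)) : ℝ :=
  radComp m ((fun g => fun i => g (S i)) '' G)

/-- Expected Rademacher complexity `R_D(G) = E_{S ∼ D^m}[R̂_S(G)]`. -/
noncomputable def expRad {Z : Type*} [MeasurableSpace Z] (m : ℕ) (D : Measure Z)
    (G : Set (Z → ℝ)) : ℝ :=
  ∫ S, empRad m S G ∂(Measure.pi fun _ : Fin m => D)

set_option maxHeartbeats 2000000 in
theorem stmt12 {Z : Type*} [MeasurableSpace Z] (D : Measure Z) [IsProbabilityMeasure D]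
    (m : ℕ) (hm : 1 ≤ m) (a b : ℝ) (hab : a < b) (G : Set (Z → ℝ)) (hG : G.Nonempty)
    (hGc : G.Countable) (hGm : ∀ g ∈ G, Measurable g)
    (hGb : ∀ g ∈ G, ∀ z, g z ∈ Set.Icc a b) (t : ℝ) (ht : 0 < t) :
    ((Measure.pi fun _ : Fin m => D).prod
        (Measure.pi fun _ : Fin m => (PMF.uniformOfFintype Bool).toMeasure))
      {p : (Fin m → Z) × (Fin m → Bool) |
        t ≤ |expRad m D G -
          (1 / (m : ℝ)) *
            sSup ((fun g => ∑ i, (if p.2 i then (1 : ℝ) else -1) * g (p.1 i)) '' G)|} ≤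
      ENNReal.ofReal
        (2 * Real.exp (-2 * m * t ^ 2 / ((b - a) ^ 2 + 4 * max (a ^ 2) (b ^ 2)))) := by
  classical
  have hm0 : (0 : ℝ) < m := by exact_mod_cast hm
  set ν : Measure Bool := (PMF.uniformOfFintype Bool).toMeasure with hν
  set μS : Measure (Fin m → Z) := Measure.pi fun _ : Fin m => D with hμS
  set μE : Measure (Fin m → Bool) := Measure.pi fun _ : Fin m => ν with hμE
  set P : Measure ((Fin m → Z) × (Fin m → Bool)) := μS.prod μE with hP
  set KB : ℝ := max |a| |b| with hKB
  have hKB0 : 0 < KB := by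
    rcases eq_or_lt_of_le (abs_nonneg b) with h | h
    · have hb : b = 0 := by rwa [eq_comm, abs_eq_zero] at h
      exact lt_max_iff.2 (Or.inl (abs_pos.2 (by rw [hb] at hab; linarith)))
    · exact lt_max_iff.2 (Or.inr h)
  have hgB : ∀ g ∈ G, ∀ z, |g z| ≤ KB := by
    intro g hg z
    obtain ⟨h1, h2⟩ := hGb g hg z
    rw [abs_le]
    constructor
    · calc -KB ≤ -|a| := by simp [hKB]
        _ ≤ a := neg_abs_le a
        _ ≤ g z := h1
    · calc g z ≤ b := h2
        _ ≤ |b| := le_abs_self b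
        _ ≤ KB := le_max_right _ _
  set T : ((Fin m → Z) × (Fin m → Bool)) → (Z → ℝ) → ℝ :=
    fun p g => ∑ i, (if p.2 i then (1 : ℝ) else -1) * g (p.1 i) with hT
  set f : ((Fin m → Z) × (Fin m → Bool)) → ℝ :=
    fun p => (1 / (m : ℝ)) * sSup (T p '' G) with hf
  obtain ⟨u, hu⟩ := hGc.exists_eq_range hG
  have humem : ∀ n, u n ∈ G := fun n => hu ▸ Set.mem_range_self n
  have hTb : ∀ p, ∀ g ∈ G, |T p g| ≤ m * KB := by
    intro p g hg
    calc |T p g| ≤ ∑ i, |(if p.2 i then (1 : ℝ) else -1) * g (p.1 i)| :=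
          Finset.abs_sum_le_sum_abs _ _
      _ ≤ ∑ _i : Fin m, KB := by
          apply Finset.sum_le_sum
          intro i _
          rcases Bool.eq_false_or_eq_true (p.2 i) with h | h <;>
            simp [h, abs_mul, hgB g hg (p.1 i)]
      _ = m * KB := by simp [mul_comm]
  have hImNe : ∀ p, (T p '' G).Nonempty := fun p => hG.image _
  have hImBdd : ∀ p, BddAbove (T p '' G) := by
    intro p
    refine ⟨m * KB, ?_⟩
    rintro x ⟨g, hg, rfl⟩
    exact le_trans (le_abs_self _) (hTb p g hg)
  have hsupB : ∀ p, |sSup (T p '' G)| ≤ m * KB := by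
    intro p
    rw [abs_le]
    constructor
    · calc -(m * KB) ≤ T p (u 0) := by
            have := hTb p (u 0) (humem 0)
            linarith [neg_abs_le (T p (u 0)), abs_nonneg (T p (u 0))]
        _ ≤ sSup (T p '' G) := le_csSup (hImBdd p) ⟨u 0, humem 0, rfl⟩
    · apply csSup_le (hImNe p)
      rintro x ⟨g, hg, rfl⟩
      exact le_trans (le_abs_self _) (hTb p g hg)
  have hfb : ∀ p, |f p| ≤ KB := by
    intro p
    rw [hf]
    simp only
    rw [abs_mul, abs_of_pos (by positivity : (0:ℝ) < 1 / (m:ℝ))]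
    calc 1 / (m:ℝ) * |sSup (T p '' G)| ≤ 1 / (m:ℝ) * (m * KB) :=
          mul_le_mul_of_nonneg_left (hsupB p) (by positivity)
      _ = KB := by field_simp
  have hsup_eq : ∀ p, sSup (T p '' G) = ⨆ n, T p (u n) := by
    intro p
    rw [hu, ← Set.range_comp]
    rfl
  have hfm : Measurable f := by
    have hfeq : f = fun p => (1 / (m:ℝ)) * ⨆ n, T p (u n) := by
      funext p
      rw [hf]
      simp only
      rw [hsup_eq p]
    rw [hfeq]
    apply Measurable.const_mul
    apply Measurable.iSup
    intro n
    have : ∀ i : Fin m, Measurable (fun p : (Fin m → Z) × (Fin m → Bool) =>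
        (if p.2 i then (1:ℝ) else -1) * u n (p.1 i)) := by
      intro i
      exact ((Measurable.of_discrete (f := fun b : Bool => if b then (1:ℝ) else -1)).comp
        ((measurable_pi_apply i).comp measurable_snd)).mul
        ((hGm (u n) (humem n)).comp ((measurable_pi_apply i).comp measurable_fst))
    exact Finset.measurable_sum Finset.univ fun i _ => this i
  -- sup difference bound
  have hsup_diff : ∀ p p' δ, (∀ g ∈ G, T p g - T p' g ≤ δ) →
      sSup (T p '' G) - sSup (T p' '' G) ≤ δ := by
    intro p p' δ hδ
    rw [sub_le_iff_le_add]
    apply csSup_le (hImNe p)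
    rintro x ⟨g, hg, rfl⟩
    calc T p g ≤ T p' g + δ := by linarith [hδ g hg]
      _ ≤ δ + sSup (T p' '' G) := by
          linarith [le_csSup (hImBdd p') (Set.mem_image_of_mem _ hg)]
  have hfdiff : ∀ p p' δ, 0 ≤ δ → (∀ g ∈ G, T p g - T p' g ≤ δ) → f p - f p' ≤ δ / m := by
    intro p p' δ hδ0 hδ
    rw [hf]
    simp only
    rw [← mul_sub]
    calc 1 / (m:ℝ) * (sSup (T p '' G) - sSup (T p' '' G)) ≤ 1 / (m:ℝ) * δ :=
          mul_le_mul_of_nonneg_left (hsup_diff p p' δ hδ) (by positivity)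
      _ = δ / m := by ring
  -- single-coordinate T differences
  have hTdS : ∀ (ε : Fin m → Bool) (i : Fin m) (S S' : Fin m → Z),
      (∀ j, j ≠ i → S j = S' j) → ∀ g ∈ G, T (S, ε) g - T (S', ε) g ≤ b - a := by
    intro ε i S S' hSS g hg
    rw [hT]
    simp only
    rw [← Finset.sum_sub_distrib]
    rw [Finset.sum_eq_single i]
    · obtain ⟨ha1, ha2⟩ := hGb g hg (S i)
      obtain ⟨hb1, hb2⟩ := hGb g hg (S' i)
      rcases Bool.eq_false_or_eq_true (ε i) with h | h <;> simp [h] <;> linarith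
    · intro j _ hj
      rw [hSS j hj]
      ring
    · intro h
      exact absurd (Finset.mem_univ i) h
  have hTdE : ∀ (S : Fin m → Z) (i : Fin m) (ε ε' : Fin m → Bool),
      (∀ j, j ≠ i → ε j = ε' j) → ∀ g ∈ G, T (S, ε) g - T (S, ε') g ≤ 2 * KB := by
    intro S i ε ε' hεε g hg
    rw [hT]
    simp only
    rw [← Finset.sum_sub_distrib]
    rw [Finset.sum_eq_single i]
    · have := hgB g hg (S i)
      rcases Bool.eq_false_or_eq_true (ε i) with h | h <;>
        rcases Bool.eq_false_or_eq_true (ε' i) with h' | h' <;>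
        simp [h, h'] <;> cases abs_le.1 this <;> linarith
    · intro j _ hj
      simp [hεε j hj]
    · intro h
      exact absurd (Finset.mem_univ i) h
  have hfi : Integrable f P := integrable_of_bounded hfm.aestronglyMeasurable KB hfb
  set Cc : ℝ := (b - a) ^ 2 + 4 * max (a ^ 2) (b ^ 2) with hCc
  have hba : (0:ℝ) < b - a := by linarith
  have hCc0 : 0 < Cc := by
    have h1 : (0:ℝ) < (b - a) ^ 2 := by positivity
    have h2 : (0:ℝ) ≤ max (a ^ 2) (b ^ 2) := le_trans (sq_nonneg a) (le_max_left _ _)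
    rw [hCc]; linarith
  have hKBsq : KB ^ 2 = max (a ^ 2) (b ^ 2) := by
    rcases le_total |a| |b| with h | h
    · rw [hKB, max_eq_right h, sq_abs, max_eq_right]
      nlinarith [abs_nonneg a, sq_abs a, sq_abs b]
    · rw [hKB, max_eq_left h, sq_abs, max_eq_left]
      nlinarith [abs_nonneg b, sq_abs a, sq_abs b]
  -- MGF bound
  have hmgf : ∀ s : ℝ, ∫ p, Real.exp (s * (f p - ∫ p', f p' ∂P)) ∂P
      ≤ Real.exp (s ^ 2 * (Cc / m) / 8) := by
    intro s
    have H1 : ∀ ε : Fin m → Bool,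
        ∫ x, Real.exp (s * (f (x, ε) - ∫ x', f (x', ε) ∂μS)) ∂μS
          ≤ Real.exp (s ^ 2 * ((b - a) ^ 2 / m) / 8) := by
      intro ε
      have := mgf_pi D m (fun S => f (S, ε))
        (hfm.comp (measurable_id.prodMk measurable_const)) KB (fun S => hfb _)
        (fun _ => (b - a) / m) (fun _ => by positivity)
        (fun i S S' hSS => hfdiff (S, ε) (S', ε) (b - a) hba.le (hTdS ε i S S' hSS)) s
      calc ∫ x, Real.exp (s * (f (x, ε) - ∫ x', f (x', ε) ∂μS)) ∂μS
          ≤ Real.exp (s ^ 2 * (∑ _i : Fin m, ((b - a) / m) ^ 2) / 8) := this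
        _ = Real.exp (s ^ 2 * ((b - a) ^ 2 / m) / 8) := by
            congr 1
            rw [Finset.sum_const, Finset.card_univ, Fintype.card_fin, nsmul_eq_mul]
            field_simp
    have hg2m : StronglyMeasurable fun ε : Fin m → Bool => ∫ S, f (S, ε) ∂μS :=
      hfm.stronglyMeasurable.integral_prod_left'
    have hg2b : ∀ ε, |∫ S, f (S, ε) ∂μS| ≤ KB := by
      intro ε
      rw [← Real.norm_eq_abs]
      calc ‖∫ S, f (S, ε) ∂μS‖ ≤ KB * (μS Set.univ).toReal :=
            norm_integral_le_of_norm_le_const (Filter.Eventually.of_forall fun S => by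
              rw [Real.norm_eq_abs]; exact hfb (S, ε))
        _ = KB := by simp
    have hg2bd : ∀ (i : Fin m) (ε ε' : Fin m → Bool), (∀ j, j ≠ i → ε j = ε' j) →
        (∫ S, f (S, ε) ∂μS) - (∫ S, f (S, ε') ∂μS) ≤ 2 * KB / m := by
      intro i ε ε' hεε
      have hi1 : Integrable (fun S => f (S, ε)) μS :=
        integrable_of_bounded (hfm.comp
          (measurable_id.prodMk measurable_const)).aestronglyMeasurable KB (fun S => hfb _)
      have hi2 : Integrable (fun S => f (S, ε')) μS :=
        integrable_of_bounded (hfm.comp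
          (measurable_id.prodMk measurable_const)).aestronglyMeasurable KB (fun S => hfb _)
      rw [← integral_sub hi1 hi2]
      calc ∫ S, (f (S, ε) - f (S, ε')) ∂μS ≤ ∫ _S, (2 * KB / m) ∂μS := by
            apply integral_mono (hi1.sub hi2) (integrable_const _)
            intro S
            exact hfdiff (S, ε) (S, ε') (2 * KB) (by positivity) (hTdE S i ε ε' hεε)
        _ = 2 * KB / m := by simp
    have H2' := mgf_pi ν m (fun ε => ∫ S, f (S, ε) ∂μS) hg2m.measurable KB hg2b
      (fun _ => 2 * KB / m) (fun _ => by positivity) hg2bd s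
    have hcenter : ∫ ε, (∫ S, f (S, ε) ∂μS) ∂μE = ∫ p, f p ∂P := by
      rw [hP, integral_prod_symm _ hfi]
    have H2 : ∫ ε, Real.exp (s * ((∫ S, f (S, ε) ∂μS) - ∫ p, f p ∂P)) ∂μE
        ≤ Real.exp (s ^ 2 * (4 * KB ^ 2 / m) / 8) := by
      rw [← hcenter]
      calc ∫ ε, Real.exp (s * ((∫ S, f (S, ε) ∂μS) - ∫ ε', (∫ S, f (S, ε') ∂μS) ∂μE)) ∂μE
          ≤ Real.exp (s ^ 2 * (∑ _i : Fin m, (2 * KB / m) ^ 2) / 8) := H2'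
        _ = Real.exp (s ^ 2 * (4 * KB ^ 2 / m) / 8) := by
            congr 1
            rw [Finset.sum_const, Finset.card_univ, Fintype.card_fin, nsmul_eq_mul]
            field_simp
            ring
    have main := mgf_prod μS μE f hfm KB hfb s _ _ (Real.exp_nonneg _) H1 H2
    calc ∫ p, Real.exp (s * (f p - ∫ p', f p' ∂P)) ∂P
        ≤ Real.exp (s ^ 2 * ((b - a) ^ 2 / m) / 8) * Real.exp (s ^ 2 * (4 * KB ^ 2 / m) / 8) :=
          main
      _ = Real.exp (s ^ 2 * (Cc / m) / 8) := by
          rw [← Real.exp_add]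
          congr 1
          rw [hCc, ← hKBsq]
          field_simp
  -- mean equals expRad
  have hν_single : ∀ x : Bool, ν {x} = 2⁻¹ := by
    intro x
    have h1 : ν {x} = (PMF.uniformOfFintype Bool) x := by
      rw [hν]
      exact PMF.toMeasure_apply_singleton (PMF.uniformOfFintype Bool) x
        (measurableSet_singleton x)
    rw [h1, PMF.uniformOfFintype_apply]
    simp
  have hμE_single : ∀ ε : Fin m → Bool, μE {ε} = (2⁻¹ : ENNReal) ^ m := by
    intro ε
    rw [hμE, ← Set.univ_pi_singleton, Measure.pi_pi]
    simp [hν_single]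
  have hμE_toReal : ∀ ε : Fin m → Bool, (μE {ε}).toReal = ((2:ℝ) ^ m)⁻¹ := by
    intro ε
    rw [hμE_single, ENNReal.toReal_pow]
    simp [inv_pow]
  have hper : ∀ (S : Fin m → Z) (ε : Fin m → Bool),
      sSup ((fun v => (1 / (m : ℝ)) * ∑ i, (if ε i then (1 : ℝ) else -1) * v i) ''
        ((fun g => fun i => g (S i)) '' G)) = f (S, ε) := by
    intro S ε
    rw [← Set.image_comp]
    have hcomp : ((fun v => (1 / (m : ℝ)) * ∑ i, (if ε i then (1 : ℝ) else -1) * v i) ∘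
        (fun g => fun i => g (S i))) = fun g => (1 / (m : ℝ)) * T (S, ε) g := by
      funext g
      simp [hT, Function.comp]
    rw [hcomp]
    have h1 : (fun g => (1 / (m : ℝ)) * T (S, ε) g) '' G
        = Set.range (fun n => (1 / (m : ℝ)) * T (S, ε) (u n)) := by
      rw [hu, ← Set.range_comp]
      rfl
    rw [h1]
    have h2 : sSup (Set.range (fun n => (1 / (m : ℝ)) * T (S, ε) (u n)))
        = ⨆ n, (1 / (m : ℝ)) * T (S, ε) (u n) := rfl
    rw [h2, ← Real.mul_iSup_of_nonneg (by positivity), hf]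
    simp only
    rw [hsup_eq (S, ε)]
  have hE : ∫ p, f p ∂P = expRad m D G := by
    rw [hP, integral_prod _ hfi]
    rw [expRad]
    apply integral_congr_ae
    apply Filter.Eventually.of_forall
    intro S
    show ∫ ε, f (S, ε) ∂μE = empRad m S G
    have hfin : Integrable (fun ε => f (S, ε)) μE := by
      apply integrable_of_bounded
      · exact (hfm.comp (measurable_const.prodMk measurable_id)).aestronglyMeasurable
      · exact fun ε => hfb (S, ε)
    rw [integral_fintype hfin]
    rw [empRad, radComp]
    rw [Finset.mul_sum]
    apply Finset.sum_congr rfl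
    intro ε _
    rw [measureReal_def, hμE_toReal ε, hper S ε, smul_eq_mul]
  -- Chernoff
  set E : ℝ := ∫ p, f p ∂P with hEdd
  have hintX : ∀ s : ℝ, Integrable (fun p => Real.exp (s * (f p - E))) P := by
    intro s
    have hEb : |E| ≤ KB := by
      rw [hEdd, ← Real.norm_eq_abs]
      calc ‖∫ p, f p ∂P‖ ≤ KB * (P Set.univ).toReal :=
            norm_integral_le_of_norm_le_const (Filter.Eventually.of_forall fun p => by
              rw [Real.norm_eq_abs]; exact hfb p)
        _ = KB := by simp
    apply integrable_of_bounded (((hfm.sub measurable_const).const_mul s)).exp.aestronglyMeasurable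
      (Real.exp (|s| * (2 * KB)))
    intro p
    rw [abs_of_nonneg (Real.exp_nonneg _), Real.exp_le_exp]
    calc s * (f p - E) ≤ |s * (f p - E)| := le_abs_self _
      _ = |s| * |f p - E| := abs_mul _ _
      _ ≤ |s| * (2 * KB) := by
          apply mul_le_mul_of_nonneg_left _ (abs_nonneg s)
          calc |f p - E| ≤ |f p| + |E| := abs_sub _ _
            _ ≤ 2 * KB := by linarith [hfb p, hEb]
  set s₀ : ℝ := 4 * t * m / Cc with hs₀d
  have hs₀ : 0 ≤ s₀ := by positivity
  have hexpo : -s₀ * t + s₀ ^ 2 * (Cc / m) / 8 = -2 * m * t ^ 2 / Cc := by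
    have h1 : Cc ≠ 0 := ne_of_gt hCc0
    have h2 : (m:ℝ) ≠ 0 := ne_of_gt hm0
    rw [hs₀d]
    field_simp
    ring
  have tailbound : ∀ X : ((Fin m → Z) × (Fin m → Bool)) → ℝ,
      (Integrable (fun p => Real.exp (s₀ * X p)) P) →
      (∫ p, Real.exp (s₀ * X p) ∂P ≤ Real.exp (s₀ ^ 2 * (Cc / m) / 8)) →
      P {p | t ≤ X p} ≤ ENNReal.ofReal (Real.exp (-2 * m * t ^ 2 / Cc)) := by
    intro X hXi hXb
    calc P {p | t ≤ X p} = ENNReal.ofReal (P {p | t ≤ X p}).toReal :=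
          (ENNReal.ofReal_toReal (measure_ne_top _ _)).symm
      _ ≤ ENNReal.ofReal (Real.exp (-s₀ * t) * mgf X P s₀) :=
          ENNReal.ofReal_le_ofReal (measure_ge_le_exp_mul_mgf t hs₀ hXi)
      _ ≤ ENNReal.ofReal (Real.exp (-2 * m * t ^ 2 / Cc)) := by
          apply ENNReal.ofReal_le_ofReal
          have hmeq : mgf X P s₀ = ∫ p, Real.exp (s₀ * X p) ∂P := by simp only [mgf]
          rw [hmeq]
          calc Real.exp (-s₀ * t) * ∫ p, Real.exp (s₀ * X p) ∂P
              ≤ Real.exp (-s₀ * t) * Real.exp (s₀ ^ 2 * (Cc / m) / 8) :=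
                mul_le_mul_of_nonneg_left hXb (Real.exp_nonneg _)
            _ = Real.exp (-s₀ * t + s₀ ^ 2 * (Cc / m) / 8) := (Real.exp_add _ _).symm
            _ = Real.exp (-2 * m * t ^ 2 / Cc) := by rw [hexpo]
  have tail1 : P {p | t ≤ f p - E} ≤ ENNReal.ofReal (Real.exp (-2 * m * t ^ 2 / Cc)) :=
    tailbound (fun p => f p - E) (hintX s₀) (hmgf s₀)
  have tail2 : P {p | t ≤ E - f p} ≤ ENNReal.ofReal (Real.exp (-2 * m * t ^ 2 / Cc)) := by
    apply tailbound (fun p => E - f p)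
    · have : (fun p => Real.exp (s₀ * (E - f p))) = fun p => Real.exp ((-s₀) * (f p - E)) := by
        funext p
        congr 1
        ring
      rw [this]
      exact hintX (-s₀)
    · have heq : (fun p => Real.exp (s₀ * (E - f p))) = fun p => Real.exp ((-s₀) * (f p - E)) := by
        funext p
        congr 1
        ring
      calc ∫ p, Real.exp (s₀ * (E - f p)) ∂P = ∫ p, Real.exp ((-s₀) * (f p - E)) ∂P := by
            rw [heq]
        _ ≤ Real.exp ((-s₀) ^ 2 * (Cc / m) / 8) := hmgf (-s₀)
        _ = Real.exp (s₀ ^ 2 * (Cc / m) / 8) := by rw [neg_pow]; ring_nf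
  have hsub : {p : (Fin m → Z) × (Fin m → Bool) |
      t ≤ |expRad m D G - (1 / (m : ℝ)) *
        sSup ((fun g => ∑ i, (if p.2 i then (1 : ℝ) else -1) * g (p.1 i)) '' G)|}
      ⊆ {p | t ≤ f p - E} ∪ {p | t ≤ E - f p} := by
    intro p hp
    have hfp : (1 / (m : ℝ)) *
        sSup ((fun g => ∑ i, (if p.2 i then (1 : ℝ) else -1) * g (p.1 i)) '' G) = f p := rfl
    rw [Set.mem_setOf_eq, hfp, ← hE] at hp
    rcases le_abs.1 hp with h | h
    · right
      exact h
    · left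
      simpa using h
  calc P {p : (Fin m → Z) × (Fin m → Bool) |
      t ≤ |expRad m D G - (1 / (m : ℝ)) *
        sSup ((fun g => ∑ i, (if p.2 i then (1 : ℝ) else -1) * g (p.1 i)) '' G)|}
      ≤ P ({p | t ≤ f p - E} ∪ {p | t ≤ E - f p}) := measure_mono hsub
    _ ≤ P {p | t ≤ f p - E} + P {p | t ≤ E - f p} := measure_union_le _ _
    _ ≤ ENNReal.ofReal (Real.exp (-2 * m * t ^ 2 / Cc)) +
        ENNReal.ofReal (Real.exp (-2 * m * t ^ 2 / Cc)) := add_le_add tail1 tail2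
    _ = ENNReal.ofReal (2 * Real.exp (-2 * m * t ^ 2 / Cc)) := by
        rw [← ENNReal.ofReal_add (Real.exp_nonneg _) (Real.exp_nonneg _)]
        congr 1
        ring
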